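/- (Nonlinear eigenvalue correction, simple eigenvalue case.) Let X be a complex Banach space, U ⊆ ℂ open, and T_h(λ), T_0(λ) compact-operator-valued analytic functions on U with T_h(λ) → T_0(λ) in operator norm uniformly for λ ∈ U, at rate c(h) → 0. Let λ_0 ∈ U, λ_0 ≠ 0, be a simple nonlinear eigenvalue of T_0 (so 1/λ_0 is a simple eigenvalue of T_0(λ_0)), with normalized eigenfunction φ and dual eigenfunction φ* (⟨φ, φ*⟩ = 1). Suppose λ_h are simple nonlinear eigenvalues of T_h with λ_h → λ_0 as h → 0, and suppose λ_0²⟨DT_0(λ_0)φ, φ*⟩ ≠ −1. Then λ_h = λ_0 + λ_0²⟨(T_0(λ_0) − T_h(λ_0))φ, φ*⟩ / (1 + λ_0²⟨DT_0(λ_0)φ, φ*⟩) + O(c(h)²). -/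

import Mathlib

set_option maxHeartbeats 1000000


open Set Filter

private lemma aux_bounded_below {X : Type*} [NormedAddCommGroup X] [NormedSpace ℂ X] [CompleteSpace X]
    (A : X →L[ℂ] X) (hcompact : IsCompactOperator ⇑A) (lam0 : ℂ)
    (φ : X) (φstar : X →L[ℂ] ℂ) (hnorm : φstar φ = 1)
    (hgeom : ∀ u : X, lam0 • A u = u → ∃ a : ℂ, u = a • φ) :
    ∃ δ > (0:ℝ), ∀ w : X, φstar w = 0 → δ * ‖w‖ ≤ ‖w - lam0 • A w‖ := by
  by_contra hcon
  push_neg at hcon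
  have hn : ∀ n : ℕ, ∃ w : X, φstar w = 0 ∧ ‖w - lam0 • A w‖ < (1/(n+1)) * ‖w‖ := by
    intro n
    obtain ⟨w, hw1, hw2⟩ := hcon (1/(n+1)) (by positivity)
    exact ⟨w, hw1, hw2⟩
  choose w hw1 hw2 using hn
  have hwne : ∀ n, 0 < ‖w n‖ := by
    intro n
    by_contra hle
    push_neg at hle
    have : ‖w n‖ = 0 := le_antisymm hle (norm_nonneg _)
    have h2 := hw2 n
    rw [this, mul_zero] at h2
    exact absurd h2 (not_lt.2 (norm_nonneg _))
  set v : ℕ → X := fun n => ((‖w n‖ : ℂ))⁻¹ • w n with hvdef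
  have hvnorm : ∀ n, ‖v n‖ = 1 := by
    intro n
    rw [hvdef]
    simp only [norm_smul, norm_inv, Complex.norm_real, Real.norm_eq_abs,
      abs_of_nonneg (norm_nonneg (w n))]
    field_simp [(hwne n).ne']
  have hvstar : ∀ n, φstar (v n) = 0 := by
    intro n
    simp [hvdef, map_smul, hw1 n]
  have hvB : ∀ n, ‖v n - lam0 • A (v n)‖ < 1/(n+1) := by
    intro n
    have lin : v n - lam0 • A (v n) = ((‖w n‖ : ℂ))⁻¹ • (w n - lam0 • A (w n)) := by
      simp only [hvdef, map_smul, smul_sub]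
      rw [smul_comm]
    rw [lin, norm_smul]
    have : ‖((‖w n‖ : ℂ))⁻¹‖ = ‖w n‖⁻¹ := by
      simp [Real.norm_eq_abs, abs_of_nonneg (norm_nonneg (w n))]
    rw [this]
    calc ‖w n‖⁻¹ * ‖w n - lam0 • A (w n)‖ < ‖w n‖⁻¹ * ((1/(n+1)) * ‖w n‖) := by
          exact mul_lt_mul_of_pos_left (hw2 n) (inv_pos.2 (hwne n))
      _ = 1/(n+1) := by field_simp [(hwne n).ne']
  -- compactness
  obtain ⟨Kc, hKcomp, hmem⟩ := hcompact
  obtain ⟨t, ht, htsub⟩ := Metric.mem_nhds_iff.1 hmem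
  have hin : ∀ n, A (((t/2 : ℝ) : ℂ) • v n) ∈ Kc := by
    intro n
    apply htsub
    simp only [Metric.mem_ball, dist_zero_right, norm_smul, hvnorm, mul_one]
    have : ‖((t/2 : ℝ) : ℂ)‖ = t/2 := by
      rw [Complex.norm_real, Real.norm_eq_abs, abs_of_pos (by linarith)]
    rw [this]
    linarith
  obtain ⟨yl, _, σ, hσ, hconv⟩ := hKcomp.tendsto_subseq hin
  have hne : ((t/2:ℝ):ℂ) ≠ 0 := by
    simp only [ne_eq, Complex.ofReal_eq_zero]
    linarith
  have hAv : Tendsto (fun n => A (v (σ n))) atTop (nhds ((((t/2:ℝ):ℂ))⁻¹ • yl)) := by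
    refine (hconv.const_smul ((((t/2:ℝ):ℂ))⁻¹)).congr (fun n => ?_)
    simp only [Function.comp_apply]
    rw [map_smul, inv_smul_smul₀ hne]
  have hBv : Tendsto (fun n => v (σ n) - lam0 • A (v (σ n))) atTop (nhds 0) := by
    rw [tendsto_zero_iff_norm_tendsto_zero]
    have hb : ∀ n, ‖v (σ n) - lam0 • A (v (σ n))‖ ≤ 1/(n+1) := by
      intro n
      refine le_trans (hvB (σ n)).le ?_
      have hle : n ≤ σ n := hσ.le_apply
      have hle' : (n : ℝ) + 1 ≤ (σ n : ℝ) + 1 := by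
        have : (n:ℝ) ≤ (σ n : ℝ) := Nat.cast_le.2 hle
        linarith
      apply one_div_le_one_div_of_le (by positivity) hle'
    exact squeeze_zero (fun n => norm_nonneg _) hb
      (by simpa using (tendsto_one_div_add_atTop_nhds_zero_nat : Tendsto (fun n : ℕ => 1 / ((n : ℝ) + 1)) atTop (nhds 0)))
  have hvconv : Tendsto (fun n => v (σ n)) atTop
      (nhds (lam0 • ((((t/2:ℝ):ℂ))⁻¹ • yl))) := by
    have := hBv.add (hAv.const_smul lam0)
    rw [zero_add] at this
    exact this.congr (fun n => by abel)
  set vl : X := lam0 • ((((t/2:ℝ):ℂ))⁻¹ • yl) with hvinf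
  have hnorm1 : ‖vl‖ = 1 := by
    have h1' : Tendsto (fun n => ‖v (σ n)‖) atTop (nhds ‖vl‖) := hvconv.norm
    have h2' : Tendsto (fun n => ‖v (σ n)‖) atTop (nhds 1) := by
      simp only [hvnorm]; exact tendsto_const_nhds
    exact tendsto_nhds_unique h1' h2'
  have hstar0 : φstar vl = 0 := by
    have h1' : Tendsto (fun n => φstar (v (σ n))) atTop (nhds (φstar vl)) :=
      (φstar.continuous.tendsto _).comp hvconv
    have h2' : Tendsto (fun n => φstar (v (σ n))) atTop (nhds 0) := by
      simp only [hvstar]; exact tendsto_const_nhds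
    exact tendsto_nhds_unique h1' h2'
  have heigv : lam0 • A vl = vl := by
    have hcont : Continuous (fun x : X => x - lam0 • A x) :=
      continuous_id.sub (A.continuous.const_smul lam0)
    have h1' : Tendsto (fun n => v (σ n) - lam0 • A (v (σ n))) atTop
        (nhds (vl - lam0 • A vl)) := (hcont.tendsto _).comp hvconv
    have h0 : vl - lam0 • A vl = 0 := tendsto_nhds_unique h1' hBv
    exact (sub_eq_zero.1 h0).symm
  obtain ⟨a, ha⟩ := hgeom vl heigv
  rw [ha, map_smul, hnorm, smul_eq_mul, mul_one] at hstar0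
  rw [ha, hstar0, zero_smul, norm_zero] at hnorm1
  exact absurd hnorm1 (by norm_num)


private lemma aux_arith1 (g l c2 c3 dn e : ℝ) (hg : 0 ≤ g) (hl : 0 ≤ l)
    (hc2 : 0 ≤ c2) (hc3 : 0 ≤ c3) (hdn : 0 ≤ dn) (he : 0 ≤ e) (hdn1 : dn ≤ 1) :
    (dn * g + l * e) + (c2 * dn^2 + c3 * (e * dn)) ≤ (g + l + c2 + c3) * (dn + e) := by
  nlinarith [mul_nonneg hg he, mul_nonneg hl hdn, mul_nonneg hc2 he,
    mul_nonneg (mul_nonneg hc2 hdn) (sub_nonneg.2 hdn1),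
    mul_nonneg (mul_nonneg hc3 he) (sub_nonneg.2 hdn1), mul_nonneg hc3 hdn]

private lemma aux_half (M2 dn e b : ℝ) (hM2 : 0 < M2) (hdn0 : 0 ≤ dn) (he0 : 0 ≤ e)
    (hdn : dn ≤ b) (he : e ≤ b) (hb : b ≤ 1/(4*M2+1)) : M2 * (dn + e) ≤ 1/2 := by
  have hb1 : b * (4*M2+1) ≤ 1 := (le_div_iff₀ (by positivity)).1 hb
  nlinarith [mul_le_mul_of_nonneg_left (add_le_add hdn he) hM2.le]

private lemma aux_alpha (p an wn : ℝ) (hp : 0 < p) (h1 : 1 ≤ an * p + wn)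
    (h2 : wn ≤ 1/2) : 1/(2*p) ≤ an := by
  rw [div_le_iff₀ (by positivity)]
  nlinarith

private lemma aux_key (p q gG l0 C2 C3 M2 dn e wn an A Gwn Ewn ρn : ℝ)
    (hp : 0 < p) (hq : 0 ≤ q) (hgG : 0 ≤ gG) (hl0 : 0 ≤ l0) (hC2 : 0 ≤ C2) (hC3 : 0 ≤ C3)
    (hM2 : 0 ≤ M2) (hdn : 0 ≤ dn) (he : 0 ≤ e) (hwn : 0 ≤ wn) (hA : 0 ≤ A)
    (hGw : Gwn ≤ q * (gG * wn)) (hEw : Ewn ≤ q * (e * wn))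
    (hρ : ρn ≤ q * (C2 * dn^2 + C3 * (e * dn)))
    (hw : wn ≤ M2 * (dn + e)) (hα : 1/(2*p) ≤ an)
    (hprod : an * A ≤ dn * Gwn + l0 * Ewn + ρn) :
    A ≤ 2*p*q*(gG * M2 + l0 * M2 + C2 + C3) * (dn + e)^2 := by
  have hde : 0 ≤ dn + e := by linarith
  have e1 : dn * Gwn ≤ q*gG*M2*(dn+e)^2 := by
    calc dn * Gwn ≤ dn * (q * (gG * wn)) := mul_le_mul_of_nonneg_left hGw hdn
      _ = (q*gG)*(dn*wn) := by ring
      _ ≤ (q*gG)*(dn*(M2*(dn+e))) := by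
          refine mul_le_mul_of_nonneg_left ?_ (mul_nonneg hq hgG)
          exact mul_le_mul_of_nonneg_left hw hdn
      _ = (q*gG*M2)*(dn*(dn+e)) := by ring
      _ ≤ (q*gG*M2)*((dn+e)*(dn+e)) := by
          refine mul_le_mul_of_nonneg_left ?_ (by positivity)
          exact mul_le_mul_of_nonneg_right (by linarith) hde
      _ = q*gG*M2*(dn+e)^2 := by ring
  have e2 : l0 * Ewn ≤ q*l0*M2*(dn+e)^2 := by
    calc l0 * Ewn ≤ l0 * (q * (e * wn)) := mul_le_mul_of_nonneg_left hEw hl0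
      _ = (q*l0)*(e*wn) := by ring
      _ ≤ (q*l0)*(e*(M2*(dn+e))) := by
          refine mul_le_mul_of_nonneg_left ?_ (mul_nonneg hq hl0)
          exact mul_le_mul_of_nonneg_left hw he
      _ = (q*l0*M2)*(e*(dn+e)) := by ring
      _ ≤ (q*l0*M2)*((dn+e)*(dn+e)) := by
          refine mul_le_mul_of_nonneg_left ?_ (by positivity)
          exact mul_le_mul_of_nonneg_right (by linarith) hde
      _ = q*l0*M2*(dn+e)^2 := by ring
  have e3 : ρn ≤ q*(C2+C3)*(dn+e)^2 := by
    refine le_trans hρ ?_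
    have g1 : dn^2 ≤ (dn+e)^2 := by nlinarith
    have g2 : e*dn ≤ (dn+e)^2 := by nlinarith
    have : C2 * dn^2 + C3 * (e*dn) ≤ (C2+C3)*(dn+e)^2 := by nlinarith
    calc q * (C2 * dn^2 + C3 * (e * dn)) ≤ q * ((C2+C3)*(dn+e)^2) :=
          mul_le_mul_of_nonneg_left this hq
      _ = q*(C2+C3)*(dn+e)^2 := by ring
  have hS : an * A ≤ q*(gG*M2 + l0*M2 + C2 + C3)*(dn+e)^2 := by
    calc an * A ≤ dn * Gwn + l0 * Ewn + ρn := hprod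
      _ ≤ q*gG*M2*(dn+e)^2 + q*l0*M2*(dn+e)^2 + q*(C2+C3)*(dn+e)^2 := by
          gcongr <;> linarith [e1, e2, e3]
      _ = q*(gG*M2 + l0*M2 + C2 + C3)*(dn+e)^2 := by ring
  have hhalf : (1/(2*p)) * A ≤ q*(gG*M2 + l0*M2 + C2 + C3)*(dn+e)^2 :=
    le_trans (mul_le_mul_of_nonneg_right hα hA) hS
  calc A = (2*p) * ((1/(2*p)) * A) := by field_simp
    _ ≤ (2*p) * (q*(gG*M2 + l0*M2 + C2 + C3)*(dn+e)^2) :=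
        mul_le_mul_of_nonneg_left hhalf (by positivity)
    _ = 2*p*q*(gG * M2 + l0 * M2 + C2 + C3) * (dn + e)^2 := by ring

private lemma aux_boot (κn C7 l0 q p dn e A : ℝ)
    (hκ : 0 < κn) (hC7 : 0 < C7) (hdn : 0 ≤ dn) (he : 0 ≤ e) (he1 : e ≤ 1)
    (hsmall : 2*C7*dn ≤ κn/2) (hl0 : 0 ≤ l0) (hq : 0 ≤ q) (hp : 0 ≤ p)
    (h1 : dn * κn ≤ A + l0 * (q * (e * p))) (hA : A ≤ C7*(dn+e)^2) :
    dn ≤ 2*(2*C7 + l0*q*p)/κn * e := by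
  have h2 : dn * κn ≤ C7*(2*dn^2+2*e^2) + l0*q*p*e := by nlinarith [sq_nonneg (dn - e)]
  have h3 : C7*(2*dn^2) ≤ (κn/2)*dn := by nlinarith
  have h4 : C7*(2*e^2) ≤ 2*C7*e := by
    nlinarith [mul_nonneg (mul_nonneg hC7.le he) (sub_nonneg.2 he1)]
  have h5 : dn * κn ≤ (κn/2)*dn + (2*C7 + l0*q*p)*e := by nlinarith
  rw [div_mul_eq_mul_div, le_div_iff₀ hκ]
  nlinarith

/-- Nonlinear eigenvalue correction formula for a simple nonlinear eigenvalue: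
`λ_h = λ_0 + λ_0²⟨(T_0(λ_0) − T_h(λ_0))φ, φ*⟩ / (1 + λ_0²⟨DT_0(λ_0)φ, φ*⟩) + O(c(h)²)`. -/
theorem nonlinear_eigenvalue_correction_simple
    {X : Type*} [NormedAddCommGroup X] [NormedSpace ℂ X] [CompleteSpace X]
    (U : Set ℂ) (hU : IsOpen U)
    (T : ℝ → ℂ → (X →L[ℂ] X)) (T0 : ℂ → (X →L[ℂ] X))
    (hanal : ∀ h > (0:ℝ), DifferentiableOn ℂ (T h) U)
    (hanal0 : DifferentiableOn ℂ T0 U)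
    (hcpt : ∀ h > (0:ℝ), ∀ lam ∈ U, IsCompactOperator ⇑(T h lam))
    (hcpt0 : ∀ lam ∈ U, IsCompactOperator ⇑(T0 lam))
    -- uniform convergence rate c(h) → 0
    (c : ℝ → ℝ) (hc0 : Tendsto c (nhdsWithin 0 (Ioi 0)) (nhds 0))
    (hcbound : ∀ h > (0:ℝ), ∀ lam ∈ U, ‖T h lam - T0 lam‖ ≤ c h)
    -- λ0 is a simple nonlinear eigenvalue of T0 with eigenpair (φ, φ*)
    (lam0 : ℂ) (hlam0U : lam0 ∈ U) (hlam0 : lam0 ≠ 0)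
    (φ : X) (hφ : φ ≠ 0) (heig : lam0 • T0 lam0 φ = φ)
    (φstar : X →L[ℂ] ℂ) (hnorm : φstar φ = 1)
    (hadj : ∀ x : X, φstar (lam0 • T0 lam0 x) = φstar x)
    -- algebraic simplicity: geometric eigenspace is spanned by φ, no generalized vectors
    (hgeom : ∀ u : X, lam0 • T0 lam0 u = u → ∃ a : ℂ, u = a • φ)
    (halg : ∀ u : X,
      (((1 : X →L[ℂ] X) - lam0 • T0 lam0) ∘L ((1 : X →L[ℂ] X) - lam0 • T0 lam0)) u = 0 →
      ((1 : X →L[ℂ] X) - lam0 • T0 lam0) u = 0)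
    -- the perturbed simple nonlinear eigenvalues λ_h → λ_0
    (lamh : ℝ → ℂ) (h1 : ℝ) (hh1 : 0 < h1)
    (heigh : ∀ h ∈ Ioo (0:ℝ) h1, lamh h ∈ U ∧ ∃ u : X, u ≠ 0 ∧ lamh h • T h (lamh h) u = u)
    (hlim : Tendsto lamh (nhdsWithin 0 (Ioi 0)) (nhds lam0))
    -- the nondegeneracy condition λ0²⟨DT0(λ0)φ, φ*⟩ ≠ −1
    (hcond : lam0 ^ 2 * φstar (deriv T0 lam0 φ) ≠ -1) :
    ∃ C > (0:ℝ), ∃ h0 > (0:ℝ), ∀ h ∈ Ioo (0:ℝ) h0,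
      ‖lamh h - (lam0 +
          lam0 ^ 2 * φstar ((T0 lam0 - T h lam0) φ) /
            (1 + lam0 ^ 2 * φstar (deriv T0 lam0 φ)))‖ ≤ C * (c h) ^ 2 := by
  classical
  -- ## Geometry: a closed ball of radius 2r inside U
  obtain ⟨r, hr, hball⟩ : ∃ r > (0:ℝ), Metric.closedBall lam0 (2*r) ⊆ U := by
    obtain ⟨ε, hε, hεU⟩ := Metric.isOpen_iff.1 hU lam0 hlam0U
    refine ⟨ε/3, by positivity, fun z hz => hεU ?_⟩
    have := Metric.mem_closedBall.1 hz
    exact Metric.mem_ball.2 (lt_of_le_of_lt this (by linarith))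
  set K : Set ℂ := Metric.closedBall lam0 r with hKdef
  have hKU : K ⊆ U := fun z hz => hball (by
    have := Metric.mem_closedBall.1 hz
    exact Metric.mem_closedBall.2 (by linarith))
  have hlam0K : lam0 ∈ K := Metric.mem_closedBall_self hr.le
  have hKc : IsCompact K := isCompact_closedBall _ _
  have hKconv : Convex ℝ K := convex_closedBall _ _
  -- ## Analyticity and bounds for T0 and its derivatives on K
  have hA : AnalyticOnNhd ℂ T0 U := hanal0.analyticOnNhd hU
  have hA1 : AnalyticOnNhd ℂ (deriv T0) U := hA.deriv
  have hA2 : AnalyticOnNhd ℂ (deriv (deriv T0)) U := hA1.deriv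
  obtain ⟨L, hL⟩ : ∃ L, ∀ z ∈ K, ‖deriv T0 z‖ ≤ L :=
    hKc.exists_bound_of_continuousOn ((hA1.continuousOn).mono hKU)
  obtain ⟨L2, hL2⟩ : ∃ L2, ∀ z ∈ K, ‖deriv (deriv T0) z‖ ≤ L2 :=
    hKc.exists_bound_of_continuousOn ((hA2.continuousOn).mono hKU)
  have hLpos : 0 ≤ L := le_trans (norm_nonneg _) (hL lam0 hlam0K)
  have hL2pos : 0 ≤ L2 := le_trans (norm_nonneg _) (hL2 lam0 hlam0K)
  -- Lipschitz bound for T0 on K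
  have hT0lip : ∀ z ∈ K, ‖T0 z - T0 lam0‖ ≤ L * ‖z - lam0‖ := by
    intro z hz
    refine hKconv.norm_image_sub_le_of_norm_hasDerivWithin_le
      (f' := deriv T0) (fun x hx => ?_) hL hlam0K hz
    exact ((hA x (hKU hx)).differentiableAt.hasDerivAt).hasDerivWithinAt
  -- Lipschitz bound for deriv T0 on K
  have hT1lip : ∀ z ∈ K, ‖deriv T0 z - deriv T0 lam0‖ ≤ L2 * ‖z - lam0‖ := by
    intro z hz
    refine hKconv.norm_image_sub_le_of_norm_hasDerivWithin_le
      (f' := deriv (deriv T0)) (fun x hx => ?_) hL2 hlam0K hz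
    exact ((hA1 x (hKU hx)).differentiableAt.hasDerivAt).hasDerivWithinAt
  -- first-order Taylor bound for T0 at lam0
  have hTay : ∀ z ∈ K, ‖T0 z - T0 lam0 - (z - lam0) • deriv T0 lam0‖ ≤ L2 * ‖z - lam0‖^2 := by
    intro z hz
    have hzr : ‖z - lam0‖ ≤ r := by
      have := Metric.mem_closedBall.1 hz
      rwa [dist_eq_norm] at this
    have hsK : Metric.closedBall lam0 ‖z - lam0‖ ⊆ K := fun x hx => Metric.mem_closedBall.2
      (le_trans (Metric.mem_closedBall.1 hx) hzr)
    have hzs : z ∈ Metric.closedBall lam0 ‖z - lam0‖ := Metric.mem_closedBall.2 (by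
      rw [dist_eq_norm])
    have hl0s : lam0 ∈ Metric.closedBall lam0 ‖z - lam0‖ :=
      Metric.mem_closedBall_self (norm_nonneg _)
    have key := (convex_closedBall lam0 ‖z - lam0‖).norm_image_sub_le_of_norm_hasDerivWithin_le
        (f := fun x => T0 x - (x - lam0) • deriv T0 lam0)
        (f' := fun x => deriv T0 x - deriv T0 lam0) (C := L2 * ‖z - lam0‖)
        (fun x hx => by
          have h1' : HasDerivAt T0 (deriv T0 x) x :=
            (hA x (hKU (hsK hx))).differentiableAt.hasDerivAt
          have h2' : HasDerivAt (fun y : ℂ => (y - lam0) • deriv T0 lam0)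
              ((1:ℂ) • deriv T0 lam0) x :=
            ((hasDerivAt_id x).sub_const lam0).smul_const (deriv T0 lam0)
          rw [one_smul] at h2'
          exact (h1'.sub h2').hasDerivWithinAt)
        (fun x hx => by
          have hxz := Metric.mem_closedBall.1 hx
          rw [dist_eq_norm] at hxz
          calc ‖deriv T0 x - deriv T0 lam0‖ ≤ L2 * ‖x - lam0‖ := hT1lip x (hsK hx)
            _ ≤ L2 * ‖z - lam0‖ := mul_le_mul_of_nonneg_left hxz hL2pos)
        hl0s hzs
    simp only [sub_self, zero_smul, sub_zero] at key
    calc ‖T0 z - T0 lam0 - (z - lam0) • deriv T0 lam0‖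
        = ‖T0 z - (z - lam0) • deriv T0 lam0 - T0 lam0‖ := by congr 1; abel
      _ ≤ (L2 * ‖z - lam0‖) * ‖z - lam0‖ := key
      _ = L2 * ‖z - lam0‖^2 := by ring
  -- ## Uniform Cauchy estimate for T h - T0
  have hcnonneg : ∀ h ∈ Ioo (0:ℝ) h1, 0 ≤ c h := fun h hh =>
    le_trans (norm_nonneg _) (hcbound h hh.1 lam0 hlam0U)
  have hCau : ∀ h ∈ Ioo (0:ℝ) h1, ∀ z ∈ K,
      ‖(T h z - T0 z) - (T h lam0 - T0 lam0)‖ ≤ (c h / r) * ‖z - lam0‖ := by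
    intro h hh
    have hDdiff : DifferentiableOn ℂ (fun z => T h z - T0 z) U := (hanal h hh.1).sub hanal0
    -- Cauchy estimate for the derivative at each point of K
    have hder : ∀ x ∈ K, ‖deriv (fun z => T h z - T0 z) x‖ ≤ c h / r := by
      intro x hx
      have hxball : Metric.closedBall x r ⊆ U := by
        intro z hz
        apply hball
        have h1' := Metric.mem_closedBall.1 hz
        have h2' := Metric.mem_closedBall.1 hx
        exact Metric.mem_closedBall.2 (le_trans (dist_triangle z x lam0) (by linarith))
      refine Complex.norm_deriv_le_of_forall_mem_sphere_norm_le hr ?_ ?_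
      · apply DifferentiableOn.diffContOnCl
        rw [closure_ball x hr.ne']
        exact hDdiff.mono hxball
      · intro z hz
        have hzU : z ∈ U := hxball (Metric.sphere_subset_closedBall hz)
        exact hcbound h hh.1 z hzU
    intro z hz
    exact hKconv.norm_image_sub_le_of_norm_hasDerivWithin_le
        (f := fun z => T h z - T0 z) (f' := fun x => deriv (fun z => T h z - T0 z) x)
        (C := c h / r)
        (fun x hx => (hDdiff.differentiableAt (hU.mem_nhds (hKU hx))).hasDerivAt.hasDerivWithinAt)
        hder hlam0K hz
  -- ## bounded below on ker φstar
  obtain ⟨δ, hδ, hbb⟩ : ∃ δ > (0:ℝ), ∀ w : X, φstar w = 0 →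
      δ * ‖w‖ ≤ ‖w - lam0 • T0 lam0 w‖ :=
    aux_bounded_below (T0 lam0) (hcpt0 lam0 hlam0U) lam0 φ φstar hnorm hgeom
  -- ## Constants
  set p : ℝ := ‖φ‖ with hpdef
  have hp : 0 < p := norm_pos_iff.2 hφ
  set q : ℝ := ‖φstar‖ with hqdef
  have hq : 0 < q := by
    rcases le_or_gt q 0 with h | h
    · exfalso
      have := φstar.le_opNorm φ
      rw [hnorm] at this
      simp only [norm_one] at this
      nlinarith [norm_nonneg φ]
    · exact h
  set G : X →L[ℂ] X := T0 lam0 + lam0 • deriv T0 lam0 with hGdef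
  set gG : ℝ := ‖G‖ with hgGdef
  have hgG : 0 ≤ gG := norm_nonneg _
  set d : ℂ := 1 + lam0 ^ 2 * φstar (deriv T0 lam0 φ) with hddef
  have hd : d ≠ 0 := by
    intro h
    apply hcond
    have : lam0 ^ 2 * φstar (deriv T0 lam0 φ) = -1 := by
      have := h; rw [hddef] at this; linear_combination this
    exact this
  set κ : ℂ := φstar (G φ) with hκdef
  have hlk : lam0 * κ = d := by
    have h1' : lam0 * φstar (T0 lam0 φ) = 1 := by
      have := hadj φ
      rw [hnorm] at this
      rw [← this]
      simp [map_smul, smul_eq_mul]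
    rw [hκdef, hGdef, hddef]
    simp only [ContinuousLinearMap.add_apply, ContinuousLinearMap.smul_apply, map_add, map_smul,
      smul_eq_mul]
    linear_combination h1'
  have hκ0 : κ ≠ 0 := by
    intro h
    apply hd
    rw [← hlk, h, mul_zero]
  have hκpos : 0 < ‖κ‖ := norm_pos_iff.2 hκ0
  set C2 : ℝ := L + ‖lam0‖ * L2 with hC2def
  set C3 : ℝ := 1 + ‖lam0‖ / r with hC3def
  have hC2 : 0 ≤ C2 := by positivity
  have hC3 : 0 ≤ C3 := by positivity
  set M2 : ℝ := δ⁻¹ * (gG + ‖lam0‖ + C2 + C3) with hM2def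
  have hM2 : 0 < M2 := by
    have : 0 < ‖lam0‖ := norm_pos_iff.2 hlam0
    have : 0 < gG + ‖lam0‖ + C2 + C3 := by positivity
    positivity
  set C7 : ℝ := (2*p) * q * (gG * M2 + ‖lam0‖ * M2 + C2 + C3) with hC7def
  have hC7 : 0 < C7 := by
    have h0 : 0 < ‖lam0‖ := norm_pos_iff.2 hlam0
    have : 0 < gG * M2 + ‖lam0‖ * M2 + C2 + C3 := by positivity
    positivity
  set C9 : ℝ := 2 * (2*C7 + ‖lam0‖ * q * p) / ‖κ‖ with hC9def
  have hC9 : 0 < C9 := by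
    have h0 : 0 < ‖lam0‖ := norm_pos_iff.2 hlam0
    positivity
  set Cfin : ℝ := (‖lam0‖ / ‖d‖) * (C7 * (C9 + 1)^2) with hCfin
  have hCfinpos : 0 < Cfin := by
    have h0 : 0 < ‖lam0‖ := norm_pos_iff.2 hlam0
    have h1' : 0 < ‖d‖ := norm_pos_iff.2 hd
    positivity
  -- ## smallness threshold
  set β : ℝ := min r (min 1 (min (1/(4*M2+1)) (‖κ‖/(4*C7)))) with hβdef
  have hβpos : 0 < β := by
    refine lt_min hr (lt_min one_pos (lt_min (by positivity) (by positivity)))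
  -- eventual smallness of ‖lamh h - lam0‖ and c h
  obtain ⟨h0, hh0pos, hh0le, hsmall⟩ : ∃ h0 > (0:ℝ), h0 ≤ h1 ∧ ∀ h ∈ Ioo (0:ℝ) h0,
      ‖lamh h - lam0‖ ≤ β ∧ c h ≤ β := by
    have ev1 : ∀ᶠ h in nhdsWithin 0 (Ioi 0), lamh h ∈ Metric.closedBall lam0 β :=
      hlim (Metric.closedBall_mem_nhds lam0 hβpos)
    have ev2 : ∀ᶠ h in nhdsWithin 0 (Ioi 0), c h ∈ Metric.closedBall 0 β :=
      hc0 (Metric.closedBall_mem_nhds 0 hβpos)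
    have ev := ev1.and ev2
    rw [Filter.eventually_iff, Metric.mem_nhdsWithin_iff] at ev
    obtain ⟨ε, hε, hsub⟩ := ev
    refine ⟨min ε h1, lt_min hε hh1, min_le_right _ _, fun h hh => ?_⟩
    have hmem : h ∈ Metric.ball (0:ℝ) ε ∩ Ioi 0 := by
      constructor
      · rw [Metric.mem_ball, Real.dist_eq, sub_zero, abs_of_pos hh.1]
        exact lt_of_lt_of_le hh.2 (min_le_left _ _)
      · exact hh.1
    obtain ⟨ha, hb⟩ := hsub hmem
    constructor
    · have := Metric.mem_closedBall.1 ha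
      rwa [dist_eq_norm] at this
    · have := Metric.mem_closedBall.1 hb
      rw [Real.dist_eq, sub_zero] at this
      exact (abs_le.1 this).2
  -- ## Conclusion
  refine ⟨Cfin, hCfinpos, h0, hh0pos, fun h hh => ?_⟩
  have hh1' : h ∈ Ioo (0:ℝ) h1 := ⟨hh.1, lt_of_lt_of_le hh.2 hh0le⟩
  obtain ⟨hUh, u0, hu0ne, hequ0⟩ := heigh h hh1'
  obtain ⟨hΔβ, hεβ⟩ := hsmall h hh
  have hβr : β ≤ r := min_le_left _ _
  have hβ1 : β ≤ 1 := le_trans (min_le_right _ _) (min_le_left _ _)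
  have hβM : β ≤ 1/(4*M2+1) :=
    le_trans (min_le_right _ _) (le_trans (min_le_right _ _) (min_le_left _ _))
  have hβκ : β ≤ ‖κ‖/(4*C7) :=
    le_trans (min_le_right _ _) (le_trans (min_le_right _ _) (min_le_right _ _))
  set lam : ℂ := lamh h with hlamdef
  set Δ : ℂ := lam - lam0 with hΔdef
  set dn : ℝ := ‖Δ‖ with hdndef
  set ε : ℝ := c h with hεdef
  have hε0 : 0 ≤ ε := hcnonneg h hh1'
  have hdn0 : 0 ≤ dn := norm_nonneg _
  have hdnβ : dn ≤ β := hΔβ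
  have hlamK : lam ∈ K := Metric.mem_closedBall.2 (by
    rw [dist_eq_norm]; exact le_trans hΔβ hβr)
  have hlamU : lam ∈ U := hKU hlamK
  -- normalized eigenvector
  set u : X := ((‖u0‖ : ℂ))⁻¹ • u0 with hudef
  have hu0norm : (0:ℝ) < ‖u0‖ := norm_pos_iff.2 hu0ne
  have hunorm : ‖u‖ = 1 := by
    rw [hudef, norm_smul, norm_inv, Complex.norm_real, Real.norm_eq_abs,
      abs_of_pos hu0norm]
    field_simp
  have hequ : lam • T h lam u = u := by
    rw [hudef, map_smul, smul_comm]
    rw [hequ0]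
  -- key vectors
  set Ee : X →L[ℂ] X := T h lam0 - T0 lam0 with hEedef
  have hEnorm : ‖Ee‖ ≤ ε := hcbound h hh.1 lam0 hlam0U
  set Gv : X := G u with hGvdef
  set Ev : X := Ee u with hEvdef
  set Bu : X := u - lam0 • T0 lam0 u with hBudef
  set ρ : X := Bu - Δ • Gv - lam0 • Ev with hρdef
  have hGvnorm : ‖Gv‖ ≤ gG := by
    rw [hGvdef]
    calc ‖G u‖ ≤ ‖G‖ * ‖u‖ := G.le_opNorm u
      _ = gG := by rw [hunorm, mul_one]
  have hEvnorm : ‖Ev‖ ≤ ε := by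
    rw [hEvdef]
    calc ‖Ee u‖ ≤ ‖Ee‖ * ‖u‖ := Ee.le_opNorm u
      _ ≤ ε := by rw [hunorm, mul_one]; exact hEnorm
  -- the remainder identity
  have hρeq : ρ = Δ • ((T0 lam - T0 lam0) u)
      + lam0 • ((T0 lam - T0 lam0 - Δ • deriv T0 lam0) u)
      + Δ • ((T h lam - T0 lam) u)
      + lam0 • (((T h lam - T0 lam) - (T h lam0 - T0 lam0)) u) := by
    rw [hρdef, hBudef, hGvdef, hEvdef, hGdef, hEedef]
    nth_rewrite 1 [← hequ]
    simp only [ContinuousLinearMap.sub_apply, ContinuousLinearMap.add_apply,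
      ContinuousLinearMap.smul_apply]
    module
  have hρnorm : ‖ρ‖ ≤ C2 * dn^2 + C3 * (ε * dn) := by
    rw [hρeq]
    have t1 : ‖Δ • ((T0 lam - T0 lam0) u)‖ ≤ dn * (L * dn) := by
      rw [norm_smul]
      refine mul_le_mul_of_nonneg_left ?_ hdn0
      calc ‖(T0 lam - T0 lam0) u‖ ≤ ‖T0 lam - T0 lam0‖ * ‖u‖ := (T0 lam - T0 lam0).le_opNorm u
        _ ≤ L * dn := by rw [hunorm, mul_one]; exact hT0lip lam hlamK
    have t2 : ‖lam0 • ((T0 lam - T0 lam0 - Δ • deriv T0 lam0) u)‖ ≤ ‖lam0‖ * (L2 * dn^2) := by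
      rw [norm_smul]
      refine mul_le_mul_of_nonneg_left ?_ (norm_nonneg _)
      calc ‖(T0 lam - T0 lam0 - Δ • deriv T0 lam0) u‖
          ≤ ‖T0 lam - T0 lam0 - Δ • deriv T0 lam0‖ * ‖u‖ :=
            (T0 lam - T0 lam0 - Δ • deriv T0 lam0).le_opNorm u
        _ ≤ L2 * dn^2 := by rw [hunorm, mul_one]; exact hTay lam hlamK
    have t3 : ‖Δ • ((T h lam - T0 lam) u)‖ ≤ dn * ε := by
      rw [norm_smul]
      refine mul_le_mul_of_nonneg_left ?_ hdn0
      calc ‖(T h lam - T0 lam) u‖ ≤ ‖T h lam - T0 lam‖ * ‖u‖ := (T h lam - T0 lam).le_opNorm u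
        _ ≤ ε := by rw [hunorm, mul_one]; exact hcbound h hh.1 lam hlamU
    have t4 : ‖lam0 • (((T h lam - T0 lam) - (T h lam0 - T0 lam0)) u)‖
        ≤ ‖lam0‖ * ((ε/r) * dn) := by
      rw [norm_smul]
      refine mul_le_mul_of_nonneg_left ?_ (norm_nonneg _)
      calc ‖((T h lam - T0 lam) - (T h lam0 - T0 lam0)) u‖
          ≤ ‖(T h lam - T0 lam) - (T h lam0 - T0 lam0)‖ * ‖u‖ :=
            ((T h lam - T0 lam) - (T h lam0 - T0 lam0)).le_opNorm u
        _ ≤ (ε/r) * dn := by rw [hunorm, mul_one]; exact hCau h hh1' lam hlamK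
    calc ‖Δ • ((T0 lam - T0 lam0) u)
        + lam0 • ((T0 lam - T0 lam0 - Δ • deriv T0 lam0) u)
        + Δ • ((T h lam - T0 lam) u)
        + lam0 • (((T h lam - T0 lam) - (T h lam0 - T0 lam0)) u)‖
        ≤ ‖Δ • ((T0 lam - T0 lam0) u)
          + lam0 • ((T0 lam - T0 lam0 - Δ • deriv T0 lam0) u)
          + Δ • ((T h lam - T0 lam) u)‖
          + ‖lam0 • (((T h lam - T0 lam) - (T h lam0 - T0 lam0)) u)‖ := norm_add_le _ _
      _ ≤ (‖Δ • ((T0 lam - T0 lam0) u)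
          + lam0 • ((T0 lam - T0 lam0 - Δ • deriv T0 lam0) u)‖
          + ‖Δ • ((T h lam - T0 lam) u)‖)
          + ‖lam0 • (((T h lam - T0 lam) - (T h lam0 - T0 lam0)) u)‖ := by
            gcongr
            exact norm_add_le _ _
      _ ≤ ((‖Δ • ((T0 lam - T0 lam0) u)‖
          + ‖lam0 • ((T0 lam - T0 lam0 - Δ • deriv T0 lam0) u)‖)
          + ‖Δ • ((T h lam - T0 lam) u)‖)
          + ‖lam0 • (((T h lam - T0 lam) - (T h lam0 - T0 lam0)) u)‖ := by
            gcongr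
            exact norm_add_le _ _
      _ ≤ ((dn * (L * dn) + ‖lam0‖ * (L2 * dn^2)) + dn * ε) + ‖lam0‖ * ((ε/r) * dn) := by
            gcongr
      _ = C2 * dn^2 + C3 * (ε * dn) := by
            rw [hC2def, hC3def]
            field_simp
            ring
  -- decomposition of u
  set α : ℂ := φstar u with hαdef
  set w : X := u - α • φ with hwdef
  have hwstar : φstar w = 0 := by
    have e : φstar w = φstar u - α * φstar φ := by
      rw [hwdef, map_sub, map_smul φstar α φ, smul_eq_mul]
    rw [e, hnorm, mul_one, hαdef, sub_self]
  have hBw : w - lam0 • T0 lam0 w = Bu := by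
    have hTw : T0 lam0 w = T0 lam0 u - α • T0 lam0 φ := by
      rw [hwdef, map_sub, map_smul (T0 lam0) α φ]
    rw [hwdef, hBudef, hTw]
    have hphi : lam0 • T0 lam0 φ = φ := heig
    linear_combination (norm := module) α • hphi
  have hBueq : Bu = Δ • Gv + lam0 • Ev + ρ := by rw [hρdef]; abel
  have hBunorm : ‖Bu‖ ≤ (gG + ‖lam0‖ + C2 + C3) * (dn + ε) := by
    calc ‖Bu‖ = ‖Δ • Gv + lam0 • Ev + ρ‖ := by rw [hBueq]
      _ ≤ ‖Δ • Gv + lam0 • Ev‖ + ‖ρ‖ := norm_add_le _ _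
      _ ≤ (‖Δ • Gv‖ + ‖lam0 • Ev‖) + ‖ρ‖ := by gcongr; exact norm_add_le _ _
      _ ≤ (dn * gG + ‖lam0‖ * ε) + (C2 * dn^2 + C3 * (ε * dn)) := by
          gcongr
          · rw [norm_smul]; exact mul_le_mul_of_nonneg_left hGvnorm hdn0
          · rw [norm_smul]; exact mul_le_mul_of_nonneg_left hEvnorm (norm_nonneg _)
      _ ≤ (gG + ‖lam0‖ + C2 + C3) * (dn + ε) :=
          aux_arith1 gG ‖lam0‖ C2 C3 dn ε hgG (norm_nonneg lam0) hC2 hC3 hdn0 hε0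
            (le_trans hdnβ hβ1)
  have hwnorm : ‖w‖ ≤ M2 * (dn + ε) := by
    have h1' := hbb w hwstar
    rw [hBw] at h1'
    have h2' := le_trans h1' hBunorm
    have h3' := mul_le_mul_of_nonneg_left h2' (by positivity : (0:ℝ) ≤ δ⁻¹)
    rw [← mul_assoc, inv_mul_cancel₀ hδ.ne', one_mul, ← mul_assoc] at h3'
    rw [hM2def, mul_assoc]
    rw [mul_assoc] at h3'
    exact h3'
  have hwhalf : ‖w‖ ≤ 1/2 :=
    le_trans hwnorm (aux_half M2 dn ε β hM2 hdn0 hε0 hdnβ hεβ hβM)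
  have hαlow : 1/(2*p) ≤ ‖α‖ := by
    have hu' : u = α • φ + w := by rw [hwdef]; abel
    have h1' : (1:ℝ) ≤ ‖α‖ * p + ‖w‖ := by
      calc (1:ℝ) = ‖u‖ := hunorm.symm
        _ = ‖α • φ + w‖ := by rw [← hu']
        _ ≤ ‖α • φ‖ + ‖w‖ := norm_add_le _ _
        _ = ‖α‖ * p + ‖w‖ := by rw [norm_smul, hpdef]
    exact aux_alpha p ‖α‖ ‖w‖ hp h1' hwhalf
  -- scalar equation
  have hsc0 : φstar Bu = 0 := by
    rw [hBudef, map_sub, hadj u, sub_self]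
  have heqn : α * (Δ * κ + lam0 * φstar (Ee φ))
      = -(Δ * φstar (G w) + lam0 * φstar (Ee w) + φstar ρ) := by
    have e1 : φstar Bu = Δ * φstar Gv + lam0 * φstar Ev + φstar ρ := by
      rw [hBueq, map_add, map_add, map_smul, map_smul, smul_eq_mul, smul_eq_mul]
    have e2 : φstar Gv = α * κ + φstar (G w) := by
      have hu' : u = α • φ + w := by rw [hwdef]; abel
      rw [hGvdef, hu', map_add, map_smul, map_add, map_smul, smul_eq_mul, hκdef]
    have e3 : φstar Ev = α * φstar (Ee φ) + φstar (Ee w) := by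
      have hu' : u = α • φ + w := by rw [hwdef]; abel
      rw [hEvdef, hu', map_add, map_smul, map_add, map_smul, smul_eq_mul]
    rw [hsc0] at e1
    linear_combination -e1 - Δ * e2 - lam0 * e3
  -- norm bounds for the scalar equation
  have hGw : ‖φstar (G w)‖ ≤ q * (gG * ‖w‖) := by
    calc ‖φstar (G w)‖ ≤ ‖φstar‖ * ‖G w‖ := φstar.le_opNorm _
      _ ≤ q * (gG * ‖w‖) := by
          rw [hqdef]
          exact mul_le_mul_of_nonneg_left (G.le_opNorm w) (norm_nonneg _)
  have hEw : ‖φstar (Ee w)‖ ≤ q * (ε * ‖w‖) := by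
    calc ‖φstar (Ee w)‖ ≤ ‖φstar‖ * ‖Ee w‖ := φstar.le_opNorm _
      _ ≤ q * (ε * ‖w‖) := by
          rw [hqdef]
          refine mul_le_mul_of_nonneg_left ?_ (norm_nonneg _)
          calc ‖Ee w‖ ≤ ‖Ee‖ * ‖w‖ := Ee.le_opNorm w
            _ ≤ ε * ‖w‖ := mul_le_mul_of_nonneg_right hEnorm (norm_nonneg _)
  have hρw : ‖φstar ρ‖ ≤ q * (C2 * dn^2 + C3 * (ε * dn)) := by
    calc ‖φstar ρ‖ ≤ ‖φstar‖ * ‖ρ‖ := φstar.le_opNorm _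
      _ ≤ q * (C2 * dn^2 + C3 * (ε * dn)) := by
          rw [hqdef]
          exact mul_le_mul_of_nonneg_left hρnorm (norm_nonneg _)
  have hEφ : ‖φstar (Ee φ)‖ ≤ q * (ε * p) := by
    calc ‖φstar (Ee φ)‖ ≤ ‖φstar‖ * ‖Ee φ‖ := φstar.le_opNorm _
      _ ≤ q * (ε * p) := by
          rw [hqdef]
          refine mul_le_mul_of_nonneg_left ?_ (norm_nonneg _)
          calc ‖Ee φ‖ ≤ ‖Ee‖ * ‖φ‖ := Ee.le_opNorm φ
            _ ≤ ε * p := by rw [hpdef]; exact mul_le_mul_of_nonneg_right hEnorm (norm_nonneg _)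
  have hprod : ‖α‖ * ‖Δ * κ + lam0 * φstar (Ee φ)‖
      ≤ dn * ‖φstar (G w)‖ + ‖lam0‖ * ‖φstar (Ee w)‖ + ‖φstar ρ‖ := by
    rw [← norm_mul, heqn, norm_neg]
    calc ‖Δ * φstar (G w) + lam0 * φstar (Ee w) + φstar ρ‖
        ≤ ‖Δ * φstar (G w) + lam0 * φstar (Ee w)‖ + ‖φstar ρ‖ := norm_add_le _ _
      _ ≤ (‖Δ * φstar (G w)‖ + ‖lam0 * φstar (Ee w)‖) + ‖φstar ρ‖ := by
          gcongr
          exact norm_add_le _ _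
      _ = dn * ‖φstar (G w)‖ + ‖lam0‖ * ‖φstar (Ee w)‖ + ‖φstar ρ‖ := by
          rw [norm_mul, norm_mul]
  have hkey : ‖Δ * κ + lam0 * φstar (Ee φ)‖ ≤ C7 * (dn + ε)^2 := by
    have h' := aux_key p q gG ‖lam0‖ C2 C3 M2 dn ε ‖w‖ ‖α‖
      ‖Δ * κ + lam0 * φstar (Ee φ)‖ ‖φstar (G w)‖ ‖φstar (Ee w)‖ ‖φstar ρ‖
      hp hq.le hgG (norm_nonneg lam0) hC2 hC3 hM2.le hdn0 hε0 (norm_nonneg w)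
      (norm_nonneg _) hGw hEw hρw hwnorm hαlow hprod
    rw [hC7def]
    exact h'
  -- bootstrap : dn ≤ C9 * ε
  have hdnε : dn ≤ C9 * ε := by
    have h1' : dn * ‖κ‖ ≤ ‖Δ * κ + lam0 * φstar (Ee φ)‖ + ‖lam0‖ * (q * (ε * p)) := by
      calc dn * ‖κ‖ = ‖Δ * κ‖ := (norm_mul _ _).symm
        _ = ‖(Δ * κ + lam0 * φstar (Ee φ)) - lam0 * φstar (Ee φ)‖ := by ring_nf
        _ ≤ ‖Δ * κ + lam0 * φstar (Ee φ)‖ + ‖lam0 * φstar (Ee φ)‖ := norm_sub_le _ _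
        _ ≤ ‖Δ * κ + lam0 * φstar (Ee φ)‖ + ‖lam0‖ * (q * (ε * p)) := by
            gcongr
            rw [norm_mul]
            exact mul_le_mul_of_nonneg_left hEφ (norm_nonneg _)
    have hsmall' : 2*C7*dn ≤ ‖κ‖/2 := by
      have hb := le_trans hdnβ hβκ
      calc 2*C7*dn ≤ 2*C7*(‖κ‖/(4*C7)) := by
            exact mul_le_mul_of_nonneg_left hb (by positivity)
        _ = ‖κ‖/2 := by
            field_simp
            ring
    have h' := aux_boot ‖κ‖ C7 ‖lam0‖ q p dn ε ‖Δ * κ + lam0 * φstar (Ee φ)‖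
      hκpos hC7 hdn0 hε0 (le_trans hεβ hβ1) hsmall' (norm_nonneg lam0) hq.le hp.le h1' hkey
    rw [hC9def]
    exact h'
  -- final bound
  have hfin : ‖Δ * κ + lam0 * φstar (Ee φ)‖ ≤ C7 * (C9+1)^2 * ε^2 := by
    refine le_trans hkey ?_
    have : dn + ε ≤ (C9+1)*ε := by linarith [hdnε]
    calc C7 * (dn + ε)^2 ≤ C7 * ((C9+1)*ε)^2 := by
          refine mul_le_mul_of_nonneg_left ?_ hC7.le
          exact pow_le_pow_left₀ (by positivity) this 2
      _ = C7 * (C9+1)^2 * ε^2 := by ring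
  have hTEφ : φstar ((T0 lam0 - T h lam0) φ) = - φstar (Ee φ) := by
    rw [hEedef]
    simp only [ContinuousLinearMap.sub_apply, map_sub]
    ring
  have hexpr : lam - (lam0 + lam0^2 * φstar ((T0 lam0 - T h lam0) φ) / d)
      = lam0 * (Δ * κ + lam0 * φstar (Ee φ)) / d := by
    rw [hTEφ, hΔdef]
    field_simp
    linear_combination (lam0 - lam) * hlk
  calc ‖lam - (lam0 + lam0^2 * φstar ((T0 lam0 - T h lam0) φ) / d)‖
      = ‖lam0‖ * ‖Δ * κ + lam0 * φstar (Ee φ)‖ / ‖d‖ := by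
        rw [hexpr, norm_div, norm_mul]
    _ ≤ ‖lam0‖ * (C7 * (C9+1)^2 * ε^2) / ‖d‖ := by
        gcongr
    _ = Cfin * ε^2 := by rw [hCfin]; ring
    _ = Cfin * (c h)^2 := by rw [hεdef]
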